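/- arXiv:2410.17895 — 9 statements merged into one kernel-verified Lean document; each statement's English description precedes it below -/
import Mathlib

section
/- Fixed Point Theorem (Smullyan's Theorem F): Let M be an r-Smullyan model. Then every M-predicate H has an M-fixed point; in fact the sentence rHrH is an M-fixed point of H. -/
/-- A Smullyan model over a set of symbols `α`: a set `pred` of predicates
(finite strings over `α`) satisfying the prefix-freeness requirement (†), together
with a naming function `phi` assigning a set of strings to each string
(only its values on `pred` are relevant). -/
structure SmullyanModel (α : Type) where
  pred : Set (List α)
  prefixFree : ∀ H ∈ pred, ∀ X : List α, X ≠ [] → H ++ X ∉ pred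
  phi : List α → Set (List α)

namespace SmullyanModel

variable {α : Type} (M : SmullyanModel α)

/-- The set of `M`-sentences: strings of the form `H ++ X` with `H` a predicate. -/
def sent : Set (List α) := {S | ∃ H ∈ M.pred, ∃ X : List α, S = H ++ X}

/-- `Sent_M^+ = Sent_M \ Pred_M`. -/
def sentPlus : Set (List α) := M.sent \ M.pred

/-- `True_M`: the set of true `M`-sentences. -/
def trueSet : Set (List α) := {S | ∃ H ∈ M.pred, ∃ X ∈ M.phi H, S = H ++ X}

/-- `True_M^+ = True_M \ Pred_M`. -/
def truePlus : Set (List α) := M.trueSet \ M.pred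

/-- `False_M = Sent_M \ True_M`. -/
def falseSet : Set (List α) := M.sent \ M.trueSet

/-- `False_M^+ = Sent_M^+ \ True_M^+`. -/
def falsePlus : Set (List α) := M.sentPlus \ M.truePlus

/-- `M ⊨ S`. -/
def Sat (S : List α) : Prop := S ∈ M.trueSet

/-- `S ∈ Sent_M^+` is an `M`-fixed point of `H` if `M ⊨ S ↔ M ⊨ HS`. -/
def IsFixedPoint (H S : List α) : Prop :=
  S ∈ M.sentPlus ∧ (M.Sat S ↔ M.Sat (H ++ S))

/-- `M` is an `n`-Smullyan model (with negation symbol `n : α`):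
for every predicate `H`, `nH` is a predicate and `Φ(nH) = Σ* \ Φ(H)`. -/
def IsNModel (n : α) : Prop :=
  ∀ H ∈ M.pred, (n :: H) ∈ M.pred ∧ M.phi (n :: H) = {X : List α | X ∉ M.phi H}

/-- `M` is an `r`-Smullyan model (with repeat symbol `r : α`):
for every predicate `H`, `rH` is a predicate and `Φ(rH) = {K ∈ Pred : KK ∈ Φ(H)}`. -/
def IsRModel (r : α) : Prop :=
  ∀ H ∈ M.pred, (r :: H) ∈ M.pred ∧
    M.phi (r :: H) = {K : List α | K ∈ M.pred ∧ K ++ K ∈ M.phi H}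

/-- FPT: every `M`-predicate has an `M`-fixed point. -/
def FPT : Prop := ∀ H ∈ M.pred, ∃ S : List α, M.IsFixedPoint H S

/-- T-Tarski: no `M`-predicate names `True_M`. -/
def TTarski : Prop := ¬ ∃ H ∈ M.pred, M.phi H = M.trueSet

/-- F-Tarski: no `M`-predicate names `False_M`. -/
def FTarski : Prop := ¬ ∃ H ∈ M.pred, M.phi H = M.falseSet

/-- T-Tarski⁺: there is no `M`-predicate `H` with `True_M⁺ = Φ(H) ∩ Sent_M⁺`. -/
def TTarskiPlus : Prop := ¬ ∃ H ∈ M.pred, M.truePlus = M.phi H ∩ M.sentPlus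

/-- F-Tarski⁺: there is no `M`-predicate `H` with `False_M⁺ = Φ(H) ∩ Sent_M⁺`. -/
def FTarskiPlus : Prop := ¬ ∃ H ∈ M.pred, M.falsePlus = M.phi H ∩ M.sentPlus

/-- mG1. -/
def MG1 : Prop :=
  ∀ H ∈ M.pred, M.phi H ⊆ M.trueSet →
    ∃ S ∈ M.sent, M.Sat S ∧ S ∉ M.phi H

/-- mG1⁺. -/
def MG1Plus : Prop :=
  ∀ H ∈ M.pred, M.phi H ∩ M.sentPlus ⊆ M.truePlus →
    ∃ S ∈ M.sentPlus, M.Sat S ∧ S ∉ M.phi H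

/-- G1 (for `n`-Smullyan models). -/
def G1 (n : α) : Prop :=
  ∀ H ∈ M.pred, M.phi H ⊆ M.trueSet →
    ∃ S ∈ M.sent, S ∉ M.phi H ∧ (n :: S) ∉ M.phi H

/-- G1⁺ (for `n`-Smullyan models). -/
def G1Plus (n : α) : Prop :=
  ∀ H ∈ M.pred, M.phi H ∩ M.sentPlus ⊆ M.truePlus →
    ∃ S ∈ M.sentPlus, S ∉ M.phi H ∧ (n :: S) ∉ M.phi H

/-- The predicate set of a simple model: strings `X♯` where `X` contains no `♯`. -/
def simplePred (sharp : α) : Set (List α) :=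
  {L | ∃ X : List α, sharp ∉ X ∧ L = X ++ [sharp]}

end SmullyanModel

/-- Smullyan's Theorem F: in an `r`-Smullyan model, every predicate `H` has a fixed
point; in fact `rHrH` is an `M`-fixed point of `H`. -/
theorem stmt_2 {α : Type} [Nonempty α] (M : SmullyanModel α) (r : α)
    (hr : M.IsRModel r) (H : List α) (hH : H ∈ M.pred) :
    M.IsFixedPoint H ((r :: H) ++ (r :: H)) := by
  obtain ⟨hK, hphi⟩ := hr H hH
  have sat_iff : ∀ H' ∈ M.pred, ∀ X : List α, M.Sat (H' ++ X) ↔ X ∈ M.phi H' := by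
    intro H' hH' X
    constructor
    · rintro ⟨G, hG, Y, hY, heq⟩
      rcases List.append_eq_append_iff.mp heq with ⟨a, ha1, ha2⟩ | ⟨a, ha1, ha2⟩
      · rcases eq_or_ne a [] with rfl | hne
        · simp at ha1 ha2; subst ha1; simpa [ha2] using hY
        · exact absurd hG (ha1 ▸ M.prefixFree H' hH' a hne)
      · rcases eq_or_ne a [] with rfl | hne
        · simp at ha1 ha2; subst ha1; simpa [ha2] using hY
        · exact absurd hH' (ha1 ▸ M.prefixFree G hG a hne)
    · intro hX; exact ⟨H', hH', X, hX, rfl⟩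
  refine ⟨⟨⟨r :: H, hK, r :: H, rfl⟩, M.prefixFree _ hK _ (by simp)⟩, ?_⟩
  rw [sat_iff _ hK, sat_iff _ hH, hphi]
  exact ⟨fun h => h.2, fun h => ⟨hK, h⟩⟩
end

section
/- Tarski's Undefinability Theorem for nr-Smullyan models (Smullyan's Theorem T): For any nr-Smullyan model M, there is no M-predicate H with Φ(H) = True_M. -/
/-- Smullyan's Theorem T: for any `nr`-Smullyan model `M`, no `M`-predicate names `True_M`. -/
theorem stmt_3 {α : Type} [Nonempty α] (M : SmullyanModel α) (n r : α)
    (hn : M.IsNModel n) (hr : M.IsRModel r) :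
    ¬ ∃ H ∈ M.pred, M.phi H = M.trueSet := by
  rintro ⟨H, hH, hphi⟩
  -- unique decomposition lemma
  have uniq : ∀ K ∈ M.pred, ∀ H' ∈ M.pred, ∀ X, K ++ K = H' ++ X → H' = K := by
    intro K hK H' hH' X hEq
    have h1 : K <+: H' ++ X := ⟨K, hEq⟩
    have h2 : H' <+: H' ++ X := List.prefix_append _ _
    rcases List.prefix_or_prefix_of_prefix h1 h2 with h | h
    · rcases h with ⟨Y, hY⟩
      by_cases hY0 : Y = []
      · simp [hY0] at hY; exact hY.symm
      · exact absurd (hY ▸ hH') (M.prefixFree K hK Y hY0)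
    · rcases h with ⟨Y, hY⟩
      by_cases hY0 : Y = []
      · simp [hY0] at hY; exact hY
      · exact absurd (hY ▸ hK) (M.prefixFree H' hH' Y hY0)
  obtain ⟨hnH, hphin⟩ := hn H hH
  obtain ⟨hrnH, hphir⟩ := hr (n :: H) hnH
  set K := r :: n :: H with hKdef
  have hKpred : K ∈ M.pred := hrnH
  -- Φ(K) = {J ∈ pred | J++J ∉ trueSet}
  have hPhiK : ∀ J, J ∈ M.phi K ↔ (J ∈ M.pred ∧ J ++ J ∉ M.trueSet) := by
    intro J
    rw [hphir]
    simp only [Set.mem_setOf_eq, hphin, hphi, Set.mem_setOf_eq]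
  -- KK ∈ trueSet ↔ K ∈ Φ(K)
  have key : K ++ K ∈ M.trueSet ↔ K ∈ M.phi K := by
    constructor
    · rintro ⟨H', hH', X, hX, hEq⟩
      have := uniq K hKpred H' hH' X hEq
      subst this
      have : X = K := List.append_cancel_left hEq.symm
      subst this; exact hX
    · intro h; exact ⟨K, hKpred, K, h, rfl⟩
  have := hPhiK K
  by_cases hT : K ++ K ∈ M.trueSet
  · exact ((this.mp (key.mp hT)).2) hT
  · exact hT (key.mpr (this.mpr ⟨hKpred, hT⟩))
end

section
/- Gödel's First Incompleteness Theorem for nr-Smullyan models (Smullyan's Theorem G): Let M be an nr-Smullyan model. For any M-predicate H satisfying Φ(H) ⊆ True_M, there exists an M-sentence S such that S ∉ Φ(H) and nS ∉ Φ(H). -/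
/-- Unique decomposition of a sentence as predicate ++ rest. -/
lemma pred_unique {α : Type} (M : SmullyanModel α) {H1 H2 X1 X2 : List α}
    (h1 : H1 ∈ M.pred) (h2 : H2 ∈ M.pred) (he : H1 ++ X1 = H2 ++ X2) :
    H1 = H2 ∧ X1 = X2 := by
  have hp : H1 <+: H2 ∨ H2 <+: H1 := by
    rcases le_or_gt H1.length H2.length with hl | hl
    · left
      exact List.prefix_of_prefix_length_le ⟨X1, he⟩ ⟨X2, rfl⟩ hl
    · right
      exact List.prefix_of_prefix_length_le ⟨X2, rfl⟩ ⟨X1, he⟩ hl.le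
  have hH : H1 = H2 := by
    rcases hp with ⟨Y, hY⟩ | ⟨Y, hY⟩
    · by_cases hy : Y = []
      · simp [hy] at hY; exact hY
      · exact absurd (hY ▸ h2) (M.prefixFree H1 h1 Y hy)
    · by_cases hy : Y = []
      · simp [hy] at hY; exact hY.symm
      · exact absurd (hY ▸ h1) (M.prefixFree H2 h2 Y hy)
  subst hH
  exact ⟨rfl, List.append_cancel_left he⟩

/-- Smullyan's Theorem G: in an `nr`-Smullyan model, for any predicate `H` with
`Φ(H) ⊆ True_M` there is a sentence `S` with `S ∉ Φ(H)` and `nS ∉ Φ(H)`. -/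
theorem stmt_4 {α : Type} [Nonempty α] (M : SmullyanModel α) (n r : α)
    (hn : M.IsNModel n) (hr : M.IsRModel r) :
    ∀ H ∈ M.pred, M.phi H ⊆ M.trueSet →
      ∃ S ∈ M.sent, S ∉ M.phi H ∧ (n :: S) ∉ M.phi H := by
  intro H hH hsub
  obtain ⟨hnH, hphinH⟩ := hn H hH
  obtain ⟨hG, hphiG⟩ := hr (n :: H) hnH
  set G : List α := r :: n :: H with hGdef
  obtain ⟨hnG, hphinG⟩ := hn G hG
  set S : List α := G ++ G with hSdef
  -- G ∈ Φ(G) ↔ S ∉ Φ(H)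
  have key : G ∈ M.phi G ↔ S ∉ M.phi H := by
    rw [hphiG]
    constructor
    · rintro ⟨-, hGG⟩
      rw [hphinH] at hGG
      exact hGG
    · intro hS
      exact ⟨hG, by rw [hphinH]; exact hS⟩
  have hSnot : S ∉ M.phi H := by
    intro hS
    have hT : S ∈ M.trueSet := hsub hS
    obtain ⟨H', hH', X, hX, hEq⟩ := hT
    obtain ⟨hH'G, hXG⟩ := pred_unique M hH' hG hEq.symm
    subst hH'G; subst hXG
    exact (key.mp hX) hS
  refine ⟨S, ⟨G, hG, G, rfl⟩, hSnot, ?_⟩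
  intro hnS
  have hT : (n :: S) ∈ M.trueSet := hsub hnS
  obtain ⟨H', hH', X, hX, hEq⟩ := hT
  have hEq2 : H' ++ X = (n :: G) ++ G := hEq.symm
  obtain ⟨hH'G, hXG⟩ := pred_unique M hH' hnG hEq2
  subst hH'G; subst hXG
  rw [hphinG] at hX
  exact hX (key.mpr hSnot)
end

section
/- For any Smullyan model M, the property FPT (every M-predicate has an M-fixed point) is equivalent to the property F-Tarski+ (there is no M-predicate H such that False_M^+ = Φ(H) ∩ Sent_M^+). -/
namespace SmullyanModel
variable {α : Type} {M : SmullyanModel α}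

lemma pred_unique {H K : List α} (hH : H ∈ M.pred) (hK : K ∈ M.pred)
    {X Y : List α} (h : H ++ X = K ++ Y) : H = K := by
  have h1 : H <+: K ++ Y := ⟨X, h⟩
  have h2 : K <+: K ++ Y := ⟨Y, rfl⟩
  rcases List.prefix_or_prefix_of_prefix h1 h2 with hp | hp
  · obtain ⟨Z, hZ⟩ := hp
    by_cases hz : Z = []
    · simpa [hz] using hZ
    · exact absurd (hZ ▸ hK) (M.prefixFree H hH Z hz)
  · obtain ⟨Z, hZ⟩ := hp
    by_cases hz : Z = []
    · simp [hz] at hZ; exact hZ.symm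
    · exact absurd (hZ ▸ hH) (M.prefixFree K hK Z hz)

lemma sat_append {H : List α} (hH : H ∈ M.pred) (S : List α) :
    M.Sat (H ++ S) ↔ S ∈ M.phi H := by
  constructor
  · rintro ⟨K, hK, X, hX, hEq⟩
    have hHK : H = K := pred_unique hH hK hEq
    subst hHK
    have : S = X := List.append_cancel_left hEq
    exact this ▸ hX
  · intro hS
    exact ⟨H, hH, S, hS, rfl⟩

lemma sentPlus_ne_nil {S : List α} (hS : S ∈ M.sentPlus) : S ≠ [] := by
  rintro rfl
  obtain ⟨⟨K, hK, X, hX⟩, hnp⟩ := hS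
  have : K = [] := by
    cases K with
    | nil => rfl
    | cons a t => simp at hX
  exact hnp (this ▸ hK)

lemma append_mem_sentPlus {H S : List α} (hH : H ∈ M.pred) (hS : S ∈ M.sentPlus) :
    H ++ S ∈ M.sentPlus :=
  ⟨⟨H, hH, S, rfl⟩, M.prefixFree H hH S (sentPlus_ne_nil hS)⟩

lemma mem_falsePlus_iff {S : List α} (hS : S ∈ M.sentPlus) :
    S ∈ M.falsePlus ↔ ¬ M.Sat S := by
  constructor
  · rintro ⟨_, hnt⟩ hsat
    exact hnt ⟨hsat, hS.2⟩
  · intro hns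
    exact ⟨hS, fun ht => hns ht.1⟩

end SmullyanModel

/-- FPT and F-Tarski⁺ are equivalent for any Smullyan model. -/
theorem stmt_5 {α : Type} [Nonempty α] (M : SmullyanModel α) :
    M.FPT ↔ M.FTarskiPlus := by
  constructor
  · rintro hfpt ⟨H, hH, hEq⟩
    obtain ⟨S, hSp, hIff⟩ := hfpt H hH
    have h1 : M.Sat S ↔ S ∈ M.phi H := hIff.trans (SmullyanModel.sat_append hH S)
    have h2 : S ∈ M.falsePlus ↔ ¬ M.Sat S := SmullyanModel.mem_falsePlus_iff hSp
    have h3 : S ∈ M.falsePlus ↔ S ∈ M.phi H := by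
      rw [hEq]; simp [Set.mem_inter_iff, hSp]
    tauto
  · intro hft H hH
    by_contra hno
    push_neg at hno
    apply hft
    refine ⟨H, hH, Set.ext fun S => ?_⟩
    constructor
    · intro hSf
      have hSp := hSf.1
      have hns : ¬ M.Sat S := (SmullyanModel.mem_falsePlus_iff hSp).mp hSf
      have hnfix := hno S
      simp only [SmullyanModel.IsFixedPoint] at hnfix
      have : ¬ (M.Sat S ↔ M.Sat (H ++ S)) := fun h => hnfix ⟨hSp, h⟩
      have hphi : S ∈ M.phi H := by
        by_contra hnp
        exact this (by rw [SmullyanModel.sat_append hH S]; tauto)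
      exact ⟨hphi, hSp⟩
    · rintro ⟨hphi, hSp⟩
      refine (SmullyanModel.mem_falsePlus_iff hSp).mpr ?_
      intro hsat
      have hnfix := hno S
      exact hnfix ⟨hSp, by rw [SmullyanModel.sat_append hH S]; tauto⟩
end

section
/- For any n-Smullyan model M, the property F-Tarski+ (there is no M-predicate H such that False_M^+ = Φ(H) ∩ Sent_M^+) is equivalent to the property T-Tarski+ (there is no M-predicate H such that True_M^+ = Φ(H) ∩ Sent_M^+). -/
/-- F-Tarski⁺ and T-Tarski⁺ are equivalent for any `n`-Smullyan model. -/
theorem stmt_8 {α : Type} [Nonempty α] (M : SmullyanModel α) (n : α)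
    (hn : M.IsNModel n) :
    M.FTarskiPlus ↔ M.TTarskiPlus := by
  have hsub : M.truePlus ⊆ M.sentPlus := by
    rintro S ⟨⟨H, hH, X, hX, rfl⟩, hnp⟩
    exact ⟨⟨H, hH, X, rfl⟩, hnp⟩
  constructor
  · rintro hF ⟨H, hH, hEq⟩
    obtain ⟨hnH, hphi⟩ := hn H hH
    refine hF ⟨n :: H, hnH, ?_⟩
    ext S
    simp only [SmullyanModel.falsePlus, hphi, Set.mem_diff, Set.mem_inter_iff, hEq,
      Set.mem_setOf_eq]
    tauto
  · rintro hT ⟨H, hH, hEq⟩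
    obtain ⟨hnH, hphi⟩ := hn H hH
    refine hT ⟨n :: H, hnH, ?_⟩
    have : M.falsePlus = M.sentPlus \ M.truePlus := rfl
    ext S
    have hs := @hsub S
    have hf : S ∈ M.falsePlus ↔ S ∈ M.sentPlus ∧ S ∉ M.truePlus := Iff.rfl
    simp only [hphi, Set.mem_inter_iff, Set.mem_setOf_eq]
    constructor
    · intro hTp
      refine ⟨fun hmem => ?_, hs hTp⟩
      have hfm : S ∈ M.falsePlus := hEq ▸ ⟨hmem, hs hTp⟩
      exact hfm.2 hTp
    · intro ⟨hnm, hsp⟩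
      by_contra hns
      have : S ∈ M.falsePlus := hf.mpr ⟨hsp, hns⟩
      rw [hEq] at this
      exact hnm this.1
end

section
/- For any n-Smullyan model M, the property mG1 (for any M-predicate H satisfying Φ(H) ⊆ True_M, there exists S ∈ Sent_M such that M ⊨ S and S ∉ Φ(H)) is equivalent to the property G1 (for any M-predicate H satisfying Φ(H) ⊆ True_M, there exists S ∈ Sent_M such that S ∉ Φ(H) and nS ∉ Φ(H)). -/
/-- mG1 and G1 are equivalent for any `n`-Smullyan model. -/
theorem stmt_9 {α : Type} [Nonempty α] (M : SmullyanModel α) (n : α)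
    (hn : M.IsNModel n) :
    M.MG1 ↔ M.G1 n := by
  -- uniqueness of decomposition
  have uniq : ∀ H1 ∈ M.pred, ∀ H2 ∈ M.pred, ∀ X1 X2 : List α,
      H1 ++ X1 = H2 ++ X2 → H1 = H2 := by
    intro H1 h1 H2 h2 X1 X2 heq
    have p1 : H1 <+: H2 ++ X2 := heq ▸ List.prefix_append H1 X1
    have p2 : H2 <+: H2 ++ X2 := List.prefix_append H2 X2
    rcases List.prefix_or_prefix_of_prefix p1 p2 with hp | hp
    · obtain ⟨t, ht⟩ := hp
      rcases eq_or_ne t [] with rfl | hne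
      · simpa using ht
      · exact absurd (ht ▸ h2) (M.prefixFree H1 h1 t hne)
    · obtain ⟨t, ht⟩ := hp
      rcases eq_or_ne t [] with rfl | hne
      · simpa using ht.symm
      · exact absurd (ht ▸ h1) (M.prefixFree H2 h2 t hne)
  have trueIff : ∀ K ∈ M.pred, ∀ X : List α,
      (K ++ X ∈ M.trueSet ↔ X ∈ M.phi K) := by
    intro K hK X
    constructor
    · rintro ⟨H, hH, Y, hY, heq⟩
      obtain rfl : K = H := uniq K hK H hH X Y heq
      obtain rfl : X = Y := List.append_cancel_left heq
      exact hY
    · intro hX; exact ⟨K, hK, X, hX, rfl⟩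
  constructor
  · intro h H hH hsub
    obtain ⟨S, hS, hsat, hnot⟩ := h H hH hsub
    refine ⟨S, hS, hnot, ?_⟩
    intro hmem
    -- nS ∈ Φ(H) ⊆ True, but S true means nS false
    have hnt : n :: S ∈ M.trueSet := hsub hmem
    obtain ⟨K, hK, X, hX, rfl⟩ := hsat
    have hnK := hn K hK
    have : (n :: K) ++ X ∈ M.trueSet := by simpa using hnt
    have hX' : X ∈ M.phi (n :: K) := (trueIff _ hnK.1 X).1 this
    rw [hnK.2] at hX'
    exact hX' hX
  · intro h H hH hsub
    obtain ⟨S, hS, hnot, hnnot⟩ := h H hH hsub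
    obtain ⟨K, hK, X, rfl⟩ := hS
    by_cases hsat : K ++ X ∈ M.trueSet
    · exact ⟨K ++ X, ⟨K, hK, X, rfl⟩, hsat, hnot⟩
    · have hnK := hn K hK
      have hX : X ∈ M.phi (n :: K) := by
        rw [hnK.2]
        exact fun hx => hsat ((trueIff K hK X).2 hx)
      refine ⟨n :: (K ++ X), ⟨n :: K, hnK.1, X, by simp⟩, ?_, ?_⟩
      · have : (n :: K) ++ X ∈ M.trueSet := (trueIff _ hnK.1 X).2 hX
        exact (by simpa using this : n :: (K ++ X) ∈ M.trueSet)
      · exact hnnot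
end

section
/- For any n-Smullyan model M, the property mG1+ (for any M-predicate H satisfying Φ(H) ∩ Sent_M^+ ⊆ True_M^+, there exists S ∈ Sent_M^+ such that M ⊨ S and S ∉ Φ(H)) is equivalent to the property G1+ (for any M-predicate H satisfying Φ(H) ∩ Sent_M^+ ⊆ True_M^+, there exists S ∈ Sent_M^+ such that S ∉ Φ(H) and nS ∉ Φ(H)). -/
namespace SmullyanModel

variable {α : Type} {M : SmullyanModel α}

lemma aux_pred_eq_of_prefix {H K : List α} (hH : H ∈ M.pred) (hK : K ∈ M.pred)
    (h : H <+: K) : H = K := by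
  obtain ⟨t, rfl⟩ := h
  rcases eq_or_ne t [] with rfl | ht
  · simp
  · exact absurd hK (M.prefixFree H hH t ht)

lemma aux_unique_decomp {H K X Y : List α} (hH : H ∈ M.pred) (hK : K ∈ M.pred)
    (h : H ++ X = K ++ Y) : H = K ∧ X = Y := by
  have h1 : H <+: K ++ Y := h ▸ List.prefix_append H X
  have h2 : K <+: K ++ Y := List.prefix_append K Y
  have hHK : H = K := by
    rcases List.prefix_or_prefix_of_prefix h1 h2 with hp | hp
    · exact aux_pred_eq_of_prefix hH hK hp
    · exact (aux_pred_eq_of_prefix hK hH hp).symm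
  subst hHK
  exact ⟨rfl, List.append_cancel_left h⟩

lemma aux_sat_iff {H X : List α} (hH : H ∈ M.pred) :
    M.Sat (H ++ X) ↔ X ∈ M.phi H := by
  constructor
  · rintro ⟨K, hK, Y, hY, hEq⟩
    obtain ⟨rfl, rfl⟩ := aux_unique_decomp hH hK hEq
    exact hY
  · intro hX
    exact ⟨H, hH, X, hX, rfl⟩

lemma aux_decomp {S : List α} (hS : S ∈ M.sentPlus) :
    ∃ K ∈ M.pred, ∃ X : List α, X ≠ [] ∧ S = K ++ X := by
  obtain ⟨⟨K, hK, X, rfl⟩, hnp⟩ := hS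
  refine ⟨K, hK, X, ?_, rfl⟩
  rintro rfl
  exact hnp (by simpa using hK)

lemma aux_neg_sentPlus (hn : M.IsNModel n) {S : List α} (hS : S ∈ M.sentPlus) :
    (n :: S) ∈ M.sentPlus := by
  obtain ⟨K, hK, X, hX, rfl⟩ := aux_decomp hS
  obtain ⟨hnK, -⟩ := hn K hK
  exact ⟨⟨n :: K, hnK, X, rfl⟩, M.prefixFree (n :: K) hnK X hX⟩

lemma aux_sat_neg (hn : M.IsNModel n) {S : List α} (hS : S ∈ M.sentPlus) :
    M.Sat (n :: S) ↔ ¬ M.Sat S := by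
  obtain ⟨K, hK, X, _, rfl⟩ := aux_decomp hS
  obtain ⟨hnK, hphi⟩ := hn K hK
  rw [aux_sat_iff hK, show (n :: (K ++ X)) = (n :: K) ++ X from rfl,
    aux_sat_iff hnK, hphi]
  rfl

end SmullyanModel

/-- mG1⁺ and G1⁺ are equivalent for any `n`-Smullyan model. -/
theorem stmt_10 {α : Type} [Nonempty α] (M : SmullyanModel α) (n : α)
    (hn : M.IsNModel n) :
    M.MG1Plus ↔ M.G1Plus n := by
  constructor
  · intro hm H hH hsub
    obtain ⟨S, hS, hsat, hnot⟩ := hm H hH hsub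
    refine ⟨S, hS, hnot, fun hns => ?_⟩
    have hnsS := SmullyanModel.aux_neg_sentPlus hn hS
    have : (n :: S) ∈ M.truePlus := hsub ⟨hns, hnsS⟩
    exact (SmullyanModel.aux_sat_neg hn hS).mp this.1 hsat
  · intro hg H hH hsub
    obtain ⟨S, hS, hnot, hnnot⟩ := hg H hH hsub
    by_cases hsat : M.Sat S
    · exact ⟨S, hS, hsat, hnot⟩
    · exact ⟨n :: S, SmullyanModel.aux_neg_sentPlus hn hS,
        (SmullyanModel.aux_sat_neg hn hS).mpr hsat, hnnot⟩
end

section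
/- There exists a Smullyan model which satisfies T-Tarski+ (there is no M-predicate H such that True_M^+ = Φ(H) ∩ Sent_M^+) but does not satisfy F-Tarski (there is no M-predicate H with Φ(H) = False_M). Concretely, the simple model with Σ = {♯} and Φ(♯) = {♯^{2i+1} : i ∈ ℕ} is such a model. -/
lemma unit_list (L : List Unit) : L = List.replicate L.length () := by
  apply List.eq_replicate_of_mem; intro b _; rfl

lemma unit_mem (X : List Unit) (h : () ∉ X) : X = [] := by
  cases X with
  | nil => rfl
  | cons a t => exact absurd (by cases a; exact List.mem_cons_self) h

lemma simplePred_unit : SmullyanModel.simplePred () = {[()]} := by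
  ext L
  constructor
  · rintro ⟨X, hX, rfl⟩
    rw [unit_mem X hX]; rfl
  · rintro rfl
    exact ⟨[], by simp, rfl⟩

/-- There is a simple model (Σ = {♯}, Φ(♯) = {♯^(2i+1) : i ∈ ℕ}) satisfying
T-Tarski⁺ but not F-Tarski. -/
theorem stmt_14 :
    ∃ M : SmullyanModel Unit,
      M.pred = SmullyanModel.simplePred () ∧
      M.phi [()] = {L : List Unit | ∃ i : ℕ, L = List.replicate (2 * i + 1) ()} ∧
      M.TTarskiPlus ∧
      ¬ M.FTarski := by
  refine ⟨⟨{[()]}, ?_, fun _ => {L : List Unit | ∃ i : ℕ, L = List.replicate (2 * i + 1) ()}⟩,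
    simplePred_unit.symm, rfl, ?_, ?_⟩
  · rintro H rfl X hX h
    simp only [Set.mem_singleton_iff] at h
    have := congrArg List.length h
    simp at this
    exact hX this
  · rintro ⟨H, hH, heq⟩
    have h2 : List.replicate 2 () ∈ (SmullyanModel.mk {[()]}
        (by rintro H rfl X hX h; simp only [Set.mem_singleton_iff] at h
            have := congrArg List.length h; simp at this
            exact hX this)
        (fun _ => {L : List Unit | ∃ i : ℕ, L = List.replicate (2 * i + 1) ()})).truePlus := by
      constructor
      · exact ⟨[()], rfl, List.replicate 1 (), ⟨0, rfl⟩, rfl⟩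
      · intro h
        have := congrArg List.length h
        simp at this
    rw [heq] at h2
    obtain ⟨⟨i, hi⟩, -⟩ := h2
    have := congrArg List.length hi
    simp at this
  · intro hF
    apply hF
    refine ⟨[()], rfl, ?_⟩
    ext L
    constructor
    · rintro ⟨i, rfl⟩
      constructor
      · refine ⟨[()], rfl, List.replicate (2 * i) (), ?_⟩
        simp [List.replicate_succ]
      · rintro ⟨H, rfl, X, ⟨j, rfl⟩, hL⟩
        have := congrArg List.length hL
        simp at this
        omega
    · rintro ⟨⟨H, rfl, X, hL⟩, hnt⟩
      subst hL
      rcases Nat.even_or_odd X.length with ⟨k, hk⟩ | ⟨k, hk⟩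
      · refine ⟨k, ?_⟩
        have hx := unit_list X
        rw [hx, hk]
        have h1 : [()] ++ List.replicate (k + k) () = List.replicate (k + k + 1) () := by
          simp [List.replicate_succ]
        rw [h1]
        congr 1
        omega
      · exfalso
        apply hnt
        refine ⟨[()], rfl, X, ⟨k, ?_⟩, rfl⟩
        rw [unit_list X, hk]
end

section
/- There exists a Smullyan model which satisfies T-Tarski+ (there is no M-predicate H such that True_M^+ = Φ(H) ∩ Sent_M^+) and F-Tarski (there is no M-predicate H with Φ(H) = False_M) but does not satisfy F-Tarski+ (there is no M-predicate H such that False_M^+ = Φ(H) ∩ Sent_M^+). Concretely, the simple model with Σ = {♯} and Φ(♯) = {♯^{2i} : i ∈ ℕ} is such a model. -/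
lemma unit_list_eq_iff {L L' : List Unit} : L = L' ↔ L.length = L'.length := by
  constructor
  · rintro rfl; rfl
  · intro h; rw [unit_list L, unit_list L', h]

lemma mem_evenSet {L : List Unit} :
    L ∈ {L : List Unit | ∃ i : ℕ, L = List.replicate (2 * i) ()} ↔ Even L.length := by
  constructor
  · rintro ⟨i, rfl⟩; simp [Nat.even_mul]
  · rintro ⟨k, hk⟩; exact ⟨k, by rw [unit_list L]; congr 1; omega⟩

/-- There is a simple model (Σ = {♯}, Φ(♯) = {♯^(2i) : i ∈ ℕ}) satisfying T-Tarski⁺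
and F-Tarski but not F-Tarski⁺. -/
theorem stmt_17 :
    ∃ M : SmullyanModel Unit,
      M.pred = SmullyanModel.simplePred () ∧
      M.phi [()] = {L : List Unit | ∃ i : ℕ, L = List.replicate (2 * i) ()} ∧
      M.TTarskiPlus ∧
      M.FTarski ∧
      ¬ M.FTarskiPlus := by
  classical
  set P : Set (List Unit) := {L : List Unit | ∃ i : ℕ, L = List.replicate (2 * i) ()} with hP
  have hprf : ∀ H ∈ ({[()]} : Set (List Unit)), ∀ X : List Unit, X ≠ [] →
      H ++ X ∉ ({[()]} : Set (List Unit)) := by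
    rintro H rfl X hX habs
    apply hX
    have := unit_list_eq_iff.mp habs
    simp at this
    exact this
  refine ⟨⟨{[()]}, hprf, fun _ => P⟩, simplePred_unit.symm, rfl, ?_⟩
  set M : SmullyanModel Unit := ⟨{[()]}, hprf, fun _ => P⟩ with hM
  have hpred : ∀ L : List Unit, L ∈ M.pred ↔ L.length = 1 := by
    intro L
    show L ∈ ({[()]} : Set (List Unit)) ↔ _
    rw [Set.mem_singleton_iff, unit_list_eq_iff]
    rfl
  have hsent : ∀ L : List Unit, L ∈ M.sent ↔ 1 ≤ L.length := by
    intro L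
    constructor
    · rintro ⟨H, hH, X, rfl⟩
      rw [hpred] at hH
      simp [hH]
    · intro hL
      refine ⟨[()], rfl, L.drop 1, ?_⟩
      rw [unit_list_eq_iff]
      simp only [List.length_append, List.length_drop, List.length_cons,
        List.length_nil]
      omega
  have htrue : ∀ L : List Unit, L ∈ M.trueSet ↔ Odd L.length := by
    intro L
    constructor
    · rintro ⟨H, hH, X, hXP, rfl⟩
      rw [hpred] at hH
      obtain ⟨k, hk⟩ := mem_evenSet.mp hXP
      refine ⟨k, ?_⟩
      simp only [List.length_append, hH]
      omega
    · rintro ⟨k, hk⟩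
      refine ⟨[()], rfl, List.replicate (2 * k) (), ⟨k, rfl⟩, ?_⟩
      rw [unit_list_eq_iff]
      simp [hk]
  constructor
  · -- TTarskiPlus
    rintro ⟨H, hH, heq⟩
    have h3 : List.replicate 3 () ∈ M.truePlus := by
      constructor
      · rw [htrue]; simp only [List.length_replicate]; decide
      · rw [hpred]; simp
    rw [heq] at h3
    have : Even (List.replicate 3 ()).length := mem_evenSet.mp h3.1
    simp only [List.length_replicate] at this
    exact (by decide : ¬ Even 3) this
  constructor
  · -- FTarski
    rintro ⟨H, hH, heq⟩
    have h0 : ([] : List Unit) ∈ M.phi H := ⟨0, rfl⟩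
    rw [heq] at h0
    have := (hsent _).mp h0.1
    simp at this
  · -- ¬ FTarskiPlus
    intro hFT
    apply hFT
    refine ⟨[()], rfl, ?_⟩
    ext L
    simp only [SmullyanModel.falsePlus, SmullyanModel.sentPlus, SmullyanModel.truePlus,
      Set.mem_diff, Set.mem_inter_iff, hsent, htrue, hpred]
    have hphi : L ∈ M.phi [()] ↔ Even L.length := mem_evenSet
    rw [hphi]
    constructor
    · rintro ⟨⟨h1, h2⟩, h3⟩
      have : ¬ Odd L.length := fun ho => h3 ⟨ho, h2⟩
      rw [Nat.not_odd_iff_even] at this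
      exact ⟨this, h1, h2⟩
    · rintro ⟨hev, h1, h2⟩
      exact ⟨⟨h1, h2⟩, fun h => (Nat.not_odd_iff_even.mpr hev) h.1⟩
end
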